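/- arXiv:2210.06380 — 3 statements merged into one kernel-verified Lean document; each statement's English description precedes it below -/
import Mathlib

section
/- Greedy approximation with errors: let F be monotone submodular with F(∅) = 0, and suppose a sequence x¹, …, xᴺ is chosen so that for each i, the marginal gain Δ(xⁱ | X^{1:i-1}) = F(X^{1:i-1} ∪ {xⁱ}) − F(X^{1:i-1}) satisfies Δ(xⁱ | X^{1:i-1}) ≥ max_x Δ(x | X^{1:i-1}) − rⁱ for errors rⁱ ≥ 0. Then F(X^{1:N}) ≥ (1 − 1/e) F(X*) − Σ_{i=1}^N rⁱ, where X* is an optimal set of size N. -/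
open Finset

lemma sum_marginals {V : Type*} [DecidableEq V]
    (F : Finset V → ℝ)
    (hmono : ∀ A B : Finset V, A ⊆ B → F A ≤ F B)
    (hsub : ∀ A B : Finset V, A ⊆ B → ∀ e ∉ B, F (insert e B) - F B ≤ F (insert e A) - F A) :
    ∀ S A : Finset V, F (A ∪ S) - F A ≤ ∑ e ∈ S \ A, (F (insert e A) - F A) := by
  intro S
  induction S using Finset.induction_on with
  | empty => intro A; simp
  | insert e s he ih =>
    intro A
    by_cases hmem : e ∈ A ∪ s
    · have h1 : A ∪ insert e s = A ∪ s := by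
        rw [Finset.union_insert, Finset.insert_eq_self.mpr hmem]
      rw [h1]
      refine (ih A).trans (Finset.sum_le_sum_of_subset_of_nonneg ?_ ?_)
      · exact Finset.sdiff_subset_sdiff (Finset.subset_insert _ _) le_rfl
      · intro i _ _
        have := hmono A (insert i A) (Finset.subset_insert _ _)
        linarith
    · have h1 : A ∪ insert e s = insert e (A ∪ s) := by
        rw [Finset.union_insert]
      have h2 : F (insert e (A ∪ s)) - F (A ∪ s) ≤ F (insert e A) - F A :=
        hsub A (A ∪ s) Finset.subset_union_left e hmem
      have h3 : insert e s \ A = insert e (s \ A) := by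
        rw [Finset.insert_sdiff_of_notMem]
        intro hA; exact hmem (Finset.mem_union_left _ hA)
      have h4 : e ∉ s \ A := fun h => he (Finset.mem_sdiff.mp h).1
      rw [h1, h3, Finset.sum_insert h4]
      have := ih A
      linarith

/-- Greedy approximation with errors: if each pick is within `r i` of the best marginal gain,
then the final value is at least `(1 - 1/e) F(Xstar) - ∑ r i`. -/
theorem greedy_with_errors {V : Type*} [Fintype V] [DecidableEq V]
    (F : Finset V → ℝ)
    (hmono : ∀ A B : Finset V, A ⊆ B → F A ≤ F B)
    (hsub : ∀ A B : Finset V, A ⊆ B → ∀ e ∉ B, F (insert e B) - F B ≤ F (insert e A) - F A)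
    (hempty : F ∅ = 0)
    (N : ℕ) (hN : 0 < N)
    (x : Fin N → V) (r : Fin N → ℝ) (hr : ∀ i, 0 ≤ r i)
    (Xset : ℕ → Finset V)
    (hXset : ∀ k : ℕ, Xset k = (Finset.univ.filter (fun j : Fin N => (j : ℕ) < k)).image x)
    (hgreedy : ∀ i : Fin N, ∀ y : V,
      F (insert y (Xset i)) - F (Xset i) - r i ≤ F (insert (x i) (Xset i)) - F (Xset i))
    (Xstar : Finset V) (hcard : Xstar.card = N)
    (hopt : ∀ Y : Finset V, Y.card ≤ N → F Y ≤ F Xstar) :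
    (1 - (Real.exp 1)⁻¹) * F Xstar - ∑ i, r i ≤ F (Xset N) := by
  have hX0 : Xset 0 = ∅ := by rw [hXset]; simp
  have hstep : ∀ i : Fin N, Xset ((i : ℕ) + 1) = insert (x i) (Xset i) := by
    intro i
    rw [hXset, hXset]
    ext v
    simp only [Finset.mem_image, Finset.mem_filter, Finset.mem_univ, true_and,
      Finset.mem_insert, Nat.lt_succ_iff_lt_or_eq]
    constructor
    · rintro ⟨j, hj | hj, hv⟩
      · exact Or.inr ⟨j, hj, hv⟩
      · exact Or.inl (by rw [← hv]; congr 1; exact Fin.ext hj)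
    · rintro (hv | ⟨j, hj, hv⟩)
      · exact ⟨i, Or.inr rfl, hv.symm⟩
      · exact ⟨j, Or.inl hj, hv⟩
  -- key per-step inequality
  have key : ∀ i : Fin N,
      F Xstar - F (Xset i) ≤ (N : ℝ) * (F (Xset ((i:ℕ)+1)) - F (Xset i) + r i) := by
    intro i
    set A := Xset (i : ℕ) with hA
    have hg0 : (0:ℝ) ≤ F (insert (x i) A) - F A := by
      have := hmono A (insert (x i) A) (Finset.subset_insert _ _); linarith
    have h1 : F Xstar ≤ F (A ∪ Xstar) := hmono _ _ Finset.subset_union_right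
    have h2 := sum_marginals F hmono hsub Xstar A
    have h3 : ∑ e ∈ Xstar \ A, (F (insert e A) - F A)
        ≤ (Xstar \ A).card • (F (insert (x i) A) - F A + r i) := by
      apply Finset.sum_le_card_nsmul
      intro e _
      have := hgreedy i e
      linarith
    have hcard' : ((Xstar \ A).card : ℝ) ≤ (N : ℝ) := by
      have : (Xstar \ A).card ≤ Xstar.card := Finset.card_le_card (Finset.sdiff_subset)
      exact_mod_cast this.trans_eq hcard
    have h4 : ((Xstar \ A).card : ℝ) * (F (insert (x i) A) - F A + r i)
        ≤ (N : ℝ) * (F (insert (x i) A) - F A + r i) := by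
      apply mul_le_mul_of_nonneg_right hcard'
      have := hr i; linarith
    rw [nsmul_eq_mul] at h3
    rw [hstep i]
    linarith
  -- the recursion
  set q : ℝ := 1 - 1 / (N : ℝ) with hq
  have hNpos : (0:ℝ) < (N : ℝ) := by exact_mod_cast hN
  have hq0 : 0 ≤ q := by
    rw [hq]
    have : 1 / (N : ℝ) ≤ 1 := by
      rw [div_le_one hNpos]; exact_mod_cast hN
    linarith
  have hq1 : q ≤ 1 := by
    rw [hq]
    have : 0 < 1 / (N : ℝ) := by positivity
    linarith
  have hrec : ∀ k : ℕ, k ≤ N →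
      F Xstar - F (Xset k) ≤ q ^ k * F Xstar
        + ∑ i ∈ Finset.univ.filter (fun j : Fin N => (j : ℕ) < k), r i := by
    intro k
    induction k with
    | zero => intro _; simp [hX0, hempty]
    | succ k ih =>
      intro hk1
      have hkN : k < N := hk1
      have ihk := ih (le_of_lt hkN)
      set i : Fin N := ⟨k, hkN⟩ with hi
      have hki := key i
      -- d(k+1) ≤ q * d k + r i
      have hdk : F Xstar - F (Xset (k+1)) ≤ q * (F Xstar - F (Xset k)) + r i := by
        have hiv : ((i : ℕ) : ℕ) = k := rfl
        rw [hiv] at hki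
        have : (F Xstar - F (Xset k)) / (N:ℝ) ≤ F (Xset (k+1)) - F (Xset k) + r i := by
          rw [div_le_iff₀ hNpos]; linarith
        have h5 : F Xstar - F (Xset (k+1)) ≤
            (F Xstar - F (Xset k)) - (F Xstar - F (Xset k)) / (N:ℝ) + r i := by linarith
        have h6 : (F Xstar - F (Xset k)) - (F Xstar - F (Xset k)) / (N:ℝ)
            = q * (F Xstar - F (Xset k)) := by
          rw [hq]; field_simp
        calc F Xstar - F (Xset (k+1))
            ≤ (F Xstar - F (Xset k)) - (F Xstar - F (Xset k)) / (N:ℝ) + r i := h5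
          _ = q * (F Xstar - F (Xset k)) + r i := by rw [h6]
      have hsum : ∑ j ∈ Finset.univ.filter (fun j : Fin N => (j : ℕ) < k + 1), r j
          = r i + ∑ j ∈ Finset.univ.filter (fun j : Fin N => (j : ℕ) < k), r j := by
        have hset : Finset.univ.filter (fun j : Fin N => (j : ℕ) < k + 1)
            = insert i (Finset.univ.filter (fun j : Fin N => (j : ℕ) < k)) := by
          ext j
          simp only [Finset.mem_filter, Finset.mem_univ, true_and, Finset.mem_insert,
            Nat.lt_succ_iff_lt_or_eq]
          constructor
          · rintro (h | h)
            · exact Or.inr h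
            · exact Or.inl (Fin.ext h)
          · rintro (h | h)
            · exact Or.inr (by rw [h])
            · exact Or.inl h
        rw [hset, Finset.sum_insert (by simp [hi])]
      have hsnn : 0 ≤ ∑ j ∈ Finset.univ.filter (fun j : Fin N => (j : ℕ) < k), r j :=
        Finset.sum_nonneg fun j _ => hr j
      have hmul := mul_le_mul_of_nonneg_left ihk hq0
      have hqs : q * (q ^ k * F Xstar + ∑ j ∈ Finset.univ.filter (fun j : Fin N => (j : ℕ) < k), r j)
          ≤ q ^ (k+1) * F Xstar + ∑ j ∈ Finset.univ.filter (fun j : Fin N => (j : ℕ) < k), r j := by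
        have : q * ∑ j ∈ Finset.univ.filter (fun j : Fin N => (j : ℕ) < k), r j
            ≤ ∑ j ∈ Finset.univ.filter (fun j : Fin N => (j : ℕ) < k), r j := by
          nlinarith
        rw [mul_add]
        have hpow : q * (q ^ k * F Xstar) = q ^ (k+1) * F Xstar := by ring
        linarith
      rw [hsum]
      linarith
  have hfin := hrec N le_rfl
  have hfilt : Finset.univ.filter (fun j : Fin N => (j : ℕ) < N) = Finset.univ := by
    ext j; simp [j.isLt]
  rw [hfilt] at hfin
  -- bound q^N ≤ exp(-1)
  have hFs : 0 ≤ F Xstar := by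
    have := hmono ∅ Xstar (Finset.empty_subset _); linarith
  have hqe : q ≤ Real.exp (-(1 / (N:ℝ))) := by
    have := Real.add_one_le_exp (-(1 / (N:ℝ)))
    rw [hq]; linarith
  have hpow : q ^ N ≤ (Real.exp 1)⁻¹ := by
    calc q ^ N ≤ (Real.exp (-(1 / (N:ℝ)))) ^ N := pow_le_pow_left₀ hq0 hqe N
    _ = Real.exp ((N:ℝ) * (-(1 / (N:ℝ)))) := by rw [← Real.exp_nat_mul]
    _ = Real.exp (-1) := by
        congr 1
        field_simp
    _ = (Real.exp 1)⁻¹ := Real.exp_neg 1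
  have : q ^ N * F Xstar ≤ (Real.exp 1)⁻¹ * F Xstar :=
    mul_le_mul_of_nonneg_right hpow hFs
  linarith
end

section
/- Confidence-interval regret bound for greedy coverage: suppose for all v ∈ V and all t, |ρ(v) − μ_{t-1}(v)| ≤ β_t^{1/2} σ_{t-1}(v). If at each time t agent i's location xᵢ_t maximizes Σ_{v ∈ Dᵢ⁻_t} (μ_{t-1}(v) + β_t^{1/2} σ_{t-1}(v)) over its feasible sensing regions, then the per-agent regret Reg^i(T) = Σ_{t=1}^T [Δ(x̃ⁱ_t | X^{1:i-1}_t) − Δ(xⁱ_t | X^{1:i-1}_t)] satisfies Reg^i(T) ≤ Σ_{t=1}^T 2 β_t^{1/2} Σ_{v ∈ Dᵢ⁻_t} σ_{t-1}(v) / |V|, where x̃ⁱ_t is the greedy-optimal choice under the true ρ. -/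
open Finset

/-- Confidence-interval regret bound for greedy coverage: if the density lies in the
confidence intervals and each chosen location maximizes the UCB sum over its marginal
sensing region, then the per-agent regret is bounded by twice the confidence widths. -/
theorem ucb_greedy_regret_bound {V : Type*} [Fintype V] [DecidableEq V]
    (T : ℕ) (ρ : V → ℝ) (μ σf : Fin T → V → ℝ) (β : Fin T → ℝ)
    (hσ : ∀ t v, 0 ≤ σf t v) (hβ : ∀ t, 0 ≤ β t)
    (hconf : ∀ t v, |ρ v - μ t v| ≤ Real.sqrt (β t) * σf t v)
    (D : V → Finset V) (E : Fin T → Finset V)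
    (x xt : Fin T → V)
    (hucb : ∀ t y, ∑ v ∈ D y \ E t, (μ t v + Real.sqrt (β t) * σf t v)
        ≤ ∑ v ∈ D (x t) \ E t, (μ t v + Real.sqrt (β t) * σf t v))
    (hxt : ∀ t y, ∑ v ∈ D y \ E t, ρ v ≤ ∑ v ∈ D (xt t) \ E t, ρ v) :
    ∑ t, ((∑ v ∈ D (xt t) \ E t, ρ v) / (Fintype.card V : ℝ)
        - (∑ v ∈ D (x t) \ E t, ρ v) / (Fintype.card V : ℝ))
      ≤ ∑ t, 2 * Real.sqrt (β t) * (∑ v ∈ D (x t) \ E t, σf t v) / (Fintype.card V : ℝ) := by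
  apply Finset.sum_le_sum
  intro t _
  have hNpos : (0 : ℝ) < Fintype.card V := by
    have : Nonempty V := ⟨x t⟩
    exact_mod_cast Fintype.card_pos
  rw [div_sub_div_same]
  apply div_le_div_of_nonneg_right ?_ hNpos.le
  have h1 : ∑ v ∈ D (xt t) \ E t, ρ v
      ≤ ∑ v ∈ D (xt t) \ E t, (μ t v + Real.sqrt (β t) * σf t v) := by
    apply Finset.sum_le_sum
    intro v _
    have := abs_le.mp (hconf t v)
    linarith [this.2]
  have h2 : ∑ v ∈ D (x t) \ E t, (μ t v + Real.sqrt (β t) * σf t v)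
      ≤ ∑ v ∈ D (x t) \ E t, (ρ v + 2 * Real.sqrt (β t) * σf t v) := by
    apply Finset.sum_le_sum
    intro v _
    have := abs_le.mp (hconf t v)
    linarith [this.1]
  have := (h1.trans (hucb t (xt t))).trans h2
  rw [Finset.sum_add_distrib, ← Finset.mul_sum] at this
  linarith
end

section
/- Simple-regret bound at a single round of constrained greedy coverage: assume two-sided confidence bounds |ρ(v) − μ_{t-1}(v)| ≤ β_t^{1/2} σ_{t-1}(v) for all v, agents picked greedily by upper confidence bound within restricted sets. Then for each agent i, Δ(x̃ⁱ_t | X^{1:i-1}_t; ρ) − Δ(xⁱ_t | X^{1:i-1}_t; ρ) ≤ 2 β_t^{1/2} Σ_{v ∈ Dⁱ⁻_t} σ_{t-1}(v)/|V| ≤ 2 β_t^{1/2} C_D max_{v ∈ Dⁱ⁻_t} σ_{t-1}(v), where C_D = max_i |Dⁱ|/|V|. Summing over agents, if the total bound is at most ε, then F(X_t) ≥ (1 − 1/e) F(X*) − ε given the greedy-with-error guarantee. -/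
open Finset

lemma my_sum_union_le {V : Type*} [DecidableEq V] (f : V → ℝ) (hf : ∀ v, 0 ≤ f v)
    (a b : Finset V) : ∑ v ∈ a ∪ b, f v ≤ ∑ v ∈ a, f v + ∑ v ∈ b, f v := by
  rw [← Finset.union_sdiff_self_eq_union, Finset.sum_union Finset.disjoint_sdiff]
  have := Finset.sum_le_sum_of_subset_of_nonneg (f := f)
    (Finset.sdiff_subset (s := b) (t := a)) (fun v _ _ => hf v)
  linarith

lemma my_sum_biUnion_le {ι V : Type*} [DecidableEq V] (f : V → ℝ) (hf : ∀ v, 0 ≤ f v)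
    (s : Finset ι) (t : ι → Finset V) :
    ∑ v ∈ s.biUnion t, f v ≤ ∑ j ∈ s, ∑ v ∈ t j, f v := by
  classical
  induction s using Finset.induction with
  | empty => simp
  | insert a s hx ih =>
    rw [Finset.biUnion_insert, Finset.sum_insert hx]
    exact (my_sum_union_le f hf _ _).trans (by linarith)

/-- Simple-regret bound at a single round of constrained greedy coverage: under two-sided
confidence bounds and UCB-greedy picks, each agent's instantaneous regret is bounded by
`2√β ∑ σ / |V| ≤ 2√β C_D max σ`; summing over agents, if the total bound is at most `ε`,
then the coverage of the chosen locations is at least `(1 - 1/e) F(X*) - ε`. -/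
theorem simple_regret_single_round {V : Type*} [Fintype V] [DecidableEq V]
    (N : ℕ) (ρ μ : V → ℝ) (σf : V → NNReal)
    (hρ : ∀ v, 0 ≤ ρ v) (β : ℝ) (hβ : 0 ≤ β)
    (hconf : ∀ v, |ρ v - μ v| ≤ Real.sqrt β * (σf v : ℝ))
    (D : V → Finset V) (CD : ℝ)
    (hCD : ∀ y, ((D y).card : ℝ) ≤ CD * (Fintype.card V : ℝ))
    (x xt : Fin N → V) (E : Fin N → Finset V)
    (hE : ∀ i : Fin N,
      E i = (Finset.univ.filter (fun j : Fin N => j < i)).biUnion (fun j => D (x j)))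
    (hucb : ∀ i : Fin N, ∀ y, ∑ v ∈ D y \ E i, (μ v + Real.sqrt β * (σf v : ℝ))
        ≤ ∑ v ∈ D (x i) \ E i, (μ v + Real.sqrt β * (σf v : ℝ)))
    (hxt : ∀ i : Fin N, ∀ y, ∑ v ∈ D y \ E i, ρ v ≤ ∑ v ∈ D (xt i) \ E i, ρ v)
    (xstar : Fin N → V)
    (hopt : ∀ y : Fin N → V,
      (∑ v ∈ Finset.univ.biUnion (fun i => D (y i)), ρ v) / (Fintype.card V : ℝ)
        ≤ (∑ v ∈ Finset.univ.biUnion (fun i => D (xstar i)), ρ v) / (Fintype.card V : ℝ))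
    (ε : ℝ) :
    (∀ i : Fin N,
      ((∑ v ∈ D (xt i) \ E i, ρ v) - ∑ v ∈ D (x i) \ E i, ρ v) / (Fintype.card V : ℝ)
          ≤ 2 * Real.sqrt β * (∑ v ∈ D (x i) \ E i, (σf v : ℝ)) / (Fintype.card V : ℝ) ∧
        2 * Real.sqrt β * (∑ v ∈ D (x i) \ E i, (σf v : ℝ)) / (Fintype.card V : ℝ)
          ≤ 2 * Real.sqrt β * CD * (((D (x i) \ E i).sup σf : NNReal) : ℝ)) ∧
      ((∑ i, 2 * Real.sqrt β * CD * (((D (x i) \ E i).sup σf : NNReal) : ℝ)) ≤ ε →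
        (1 - (Real.exp 1)⁻¹) *
            ((∑ v ∈ Finset.univ.biUnion (fun i => D (xstar i)), ρ v) /
              (Fintype.card V : ℝ)) - ε
          ≤ (∑ v ∈ Finset.univ.biUnion (fun i => D (x i)), ρ v) / (Fintype.card V : ℝ)) := by
  classical
  set c : ℝ := (Fintype.card V : ℝ) with hcdef
  have hc0 : (0:ℝ) ≤ c := Nat.cast_nonneg _
  have hci : (0:ℝ) ≤ c⁻¹ := inv_nonneg.mpr hc0
  have hsb : (0:ℝ) ≤ Real.sqrt β := Real.sqrt_nonneg β
  have hσ : ∀ v, (0:ℝ) ≤ (σf v : ℝ) := fun v => (σf v).coe_nonneg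
  have hup : ∀ v, ρ v ≤ μ v + Real.sqrt β * (σf v : ℝ) := fun v => by
    have := (abs_le.mp (hconf v)).2; linarith
  have hlo : ∀ v, μ v ≤ ρ v + Real.sqrt β * (σf v : ℝ) := fun v => by
    have := (abs_le.mp (hconf v)).1; linarith
  -- per-agent numerator bound
  have hnum : ∀ i : Fin N, (∑ v ∈ D (xt i) \ E i, ρ v) - ∑ v ∈ D (x i) \ E i, ρ v
      ≤ 2 * Real.sqrt β * ∑ v ∈ D (x i) \ E i, (σf v : ℝ) := by
    intro i
    have h1 : ∑ v ∈ D (xt i) \ E i, ρ v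
        ≤ ∑ v ∈ D (xt i) \ E i, (μ v + Real.sqrt β * (σf v : ℝ)) :=
      Finset.sum_le_sum (fun v _ => hup v)
    have h2 := hucb i (xt i)
    have h3 : ∑ v ∈ D (x i) \ E i, (μ v + Real.sqrt β * (σf v : ℝ))
        ≤ ∑ v ∈ D (x i) \ E i, (ρ v + 2 * Real.sqrt β * (σf v : ℝ)) :=
      Finset.sum_le_sum (fun v _ => by have := hlo v; linarith)
    simp only [Finset.sum_add_distrib, ← Finset.mul_sum] at h1 h2 h3
    linarith
  have part1 : ∀ i : Fin N,
      ((∑ v ∈ D (xt i) \ E i, ρ v) - ∑ v ∈ D (x i) \ E i, ρ v) / c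
          ≤ 2 * Real.sqrt β * (∑ v ∈ D (x i) \ E i, (σf v : ℝ)) / c ∧
        2 * Real.sqrt β * (∑ v ∈ D (x i) \ E i, (σf v : ℝ)) / c
          ≤ 2 * Real.sqrt β * CD * (((D (x i) \ E i).sup σf : NNReal) : ℝ) := by
    intro i
    constructor
    · have := mul_le_mul_of_nonneg_right (hnum i) hci
      rw [div_eq_mul_inv, div_eq_mul_inv]
      linarith
    · rcases eq_or_lt_of_le hc0 with hc | hc
      · -- c = 0 : V is empty
        have hcc : (Fintype.card V : ℝ) = 0 := by rw [← hcdef]; exact hc.symm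
        have hcard : Fintype.card V = 0 := by exact_mod_cast hcc
        haveI : IsEmpty V := Fintype.card_eq_zero_iff.mp hcard
        have hempty : D (x i) \ E i = ∅ := Finset.eq_empty_of_isEmpty _
        simp [hempty]
      · set m : ℝ := (((D (x i) \ E i).sup σf : NNReal) : ℝ) with hmdef
        have hm0 : (0:ℝ) ≤ m := NNReal.coe_nonneg _
        have hsum_le : ∑ v ∈ D (x i) \ E i, (σf v : ℝ)
            ≤ ((D (x i) \ E i).card : ℝ) * m := by
          calc ∑ v ∈ D (x i) \ E i, (σf v : ℝ) ≤ ∑ _v ∈ D (x i) \ E i, m :=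
                Finset.sum_le_sum (fun v hv => by
                  exact_mod_cast NNReal.coe_le_coe.mpr (Finset.le_sup hv))
            _ = ((D (x i) \ E i).card : ℝ) * m := by
                rw [Finset.sum_const, nsmul_eq_mul]
        have hcard : ((D (x i) \ E i).card : ℝ) ≤ CD * c := by
          have h1 : ((D (x i) \ E i).card : ℝ) ≤ ((D (x i)).card : ℝ) := by
            exact_mod_cast Finset.card_le_card (Finset.sdiff_subset)
          exact h1.trans (hCD (x i))
        have hsum' : ∑ v ∈ D (x i) \ E i, (σf v : ℝ) ≤ CD * c * m :=
          hsum_le.trans (mul_le_mul_of_nonneg_right hcard hm0)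
        rw [div_le_iff₀ hc]
        have := mul_le_mul_of_nonneg_left hsum'
          (by positivity : (0:ℝ) ≤ 2 * Real.sqrt β)
        linarith
  refine ⟨part1, ?_⟩
  intro hε
  have hFstar0 : (0:ℝ) ≤ (∑ v ∈ Finset.univ.biUnion (fun i => D (xstar i)), ρ v) / c :=
    div_nonneg (Finset.sum_nonneg (fun v _ => hρ v)) hc0
  by_cases hN : N = 0
  · subst hN
    have hε0 : (0:ℝ) ≤ ε := by simpa using hε
    have h0 : (Finset.univ : Finset (Fin 0)).biUnion (fun i => D (x i)) = ∅ := by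
      simp [Finset.univ_eq_empty]
    have h0' : (Finset.univ : Finset (Fin 0)).biUnion (fun i => D (xstar i)) = ∅ := by
      simp [Finset.univ_eq_empty]
    rw [h0, h0']
    simp only [Finset.sum_empty, zero_div, mul_zero]
    linarith
  · have hN1 : 1 ≤ N := Nat.one_le_iff_ne_zero.mpr hN
    have hNpos : (0:ℝ) < (N:ℝ) := by exact_mod_cast Nat.pos_of_ne_zero hN
    set q : ℝ := 1 - 1/(N:ℝ) with hqdef
    have hinv1 : 1/(N:ℝ) ≤ 1 := by
      rw [div_le_one hNpos]; exact_mod_cast hN1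
    have hq0 : (0:ℝ) ≤ q := by rw [hqdef]; linarith
    have hq1 : q ≤ 1 := by
      rw [hqdef]
      have : (0:ℝ) ≤ 1/(N:ℝ) := by positivity
      linarith
    clear_value q
    set A : ℕ → Finset V := fun k =>
      (Finset.univ.filter (fun j : Fin N => (j:ℕ) < k)).biUnion (fun j => D (x j))
      with hAdef
    have hEA : ∀ i : Fin N, E i = A (i : ℕ) := by
      intro i
      rw [hE]
      ext v
      simp only [hAdef, Finset.mem_biUnion, Finset.mem_filter, Finset.mem_univ,
        true_and, Fin.lt_def]
    have hA0 : A 0 = ∅ := by simp [hAdef]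
    have hAN : A N = Finset.univ.biUnion (fun i => D (x i)) := by
      simp [hAdef, Fin.is_lt]
    have hstep : ∀ k (hk : k < N), A (k+1) = A k ∪ D (x ⟨k, hk⟩) := by
      intro k hk
      ext v
      simp only [hAdef, Finset.mem_biUnion, Finset.mem_filter, Finset.mem_union,
        Finset.mem_univ, true_and]
      constructor
      · rintro ⟨j, hj, hv⟩
        rcases Nat.lt_succ_iff_lt_or_eq.mp hj with h | h
        · exact Or.inl ⟨j, h, hv⟩
        · right
          have hje : j = ⟨k, hk⟩ := Fin.ext h
          rwa [hje] at hv
      · rintro (⟨j, hj, hv⟩ | hv)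
        · exact ⟨j, Nat.lt_succ_of_lt hj, hv⟩
        · exact ⟨⟨k, hk⟩, Nat.lt_succ_self k, hv⟩
    set r : ℕ → ℝ := fun j =>
      if hj : j < N then
        ((∑ v ∈ D (xt ⟨j, hj⟩) \ A j, ρ v) - ∑ v ∈ D (x ⟨j, hj⟩) \ A j, ρ v) / c
      else 0 with hrdef
    have hr0 : ∀ j, 0 ≤ r j := by
      intro j
      simp only [hrdef]
      by_cases hj : j < N
      · rw [dif_pos hj]
        have := hxt ⟨j, hj⟩ (x ⟨j, hj⟩)
        rw [hEA ⟨j, hj⟩] at this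
        have hnum0 : (0:ℝ) ≤ (∑ v ∈ D (xt ⟨j, hj⟩) \ A j, ρ v)
            - ∑ v ∈ D (x ⟨j, hj⟩) \ A j, ρ v := by linarith
        exact div_nonneg hnum0 hc0
      · rw [dif_neg hj]

    -- key per-step inequality
    have hkey : ∀ k (hk : k < N),
        (∑ v ∈ Finset.univ.biUnion (fun j => D (xstar j)), ρ v)
          ≤ (∑ v ∈ A k, ρ v) + (N:ℝ) * ∑ v ∈ D (xt ⟨k, hk⟩) \ A k, ρ v := by
      intro k hk
      have hsub : Finset.univ.biUnion (fun j => D (xstar j))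
          ⊆ A k ∪ ((Finset.univ.biUnion (fun j => D (xstar j))) \ A k) := by
        intro v hv
        by_cases h : v ∈ A k
        · exact Finset.mem_union_left _ h
        · exact Finset.mem_union_right _ (Finset.mem_sdiff.mpr ⟨hv, h⟩)
      have h1 := Finset.sum_le_sum_of_subset_of_nonneg hsub (fun v _ _ => hρ v)
      rw [Finset.sum_union Finset.disjoint_sdiff] at h1
      have h2 : (Finset.univ.biUnion (fun j => D (xstar j))) \ A k
          = Finset.univ.biUnion (fun j : Fin N => D (xstar j) \ A k) := by
        ext v
        simp only [Finset.mem_sdiff, Finset.mem_biUnion, Finset.mem_univ, true_and]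
        tauto
      have h3 := my_sum_biUnion_le ρ hρ Finset.univ (fun j : Fin N => D (xstar j) \ A k)
      rw [← h2] at h3
      have h4 : ∑ j : Fin N, ∑ v ∈ D (xstar j) \ A k, ρ v
          ≤ ∑ _j : Fin N, ∑ v ∈ D (xt ⟨k, hk⟩) \ A k, ρ v :=
        Finset.sum_le_sum (fun j _ => by
          have := hxt ⟨k, hk⟩ (xstar j)
          rwa [hEA ⟨k, hk⟩] at this)
      have h5 : ∑ _j : Fin N, ∑ v ∈ D (xt ⟨k, hk⟩) \ A k, ρ v
          = (N:ℝ) * ∑ v ∈ D (xt ⟨k, hk⟩) \ A k, ρ v := by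
        rw [Finset.sum_const, Finset.card_univ, Fintype.card_fin, nsmul_eq_mul]
      rw [h5] at h4
      linarith
    -- telescoping
    have hG : ∀ k (hk : k < N),
        ∑ v ∈ A (k+1), ρ v = (∑ v ∈ A k, ρ v) + ∑ v ∈ D (x ⟨k, hk⟩) \ A k, ρ v := by
      intro k hk
      rw [hstep k hk, ← Finset.union_sdiff_self_eq_union,
        Finset.sum_union Finset.disjoint_sdiff]
    -- main induction
    have key : ∀ k, k ≤ N →
        (∑ v ∈ Finset.univ.biUnion (fun j => D (xstar j)), ρ v) / c - (∑ v ∈ A k, ρ v) / c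
          ≤ q^k * ((∑ v ∈ Finset.univ.biUnion (fun j => D (xstar j)), ρ v) / c)
            + ∑ j ∈ Finset.range k, r j := by
      intro k
      induction k with
      | zero => intro _; simp [hA0]
      | succ k ih =>
        intro hk1
        have hk : k < N := Nat.lt_of_succ_le hk1
        have ih' := ih (Nat.le_of_lt hk)
        set Fs : ℝ := (∑ v ∈ Finset.univ.biUnion (fun j => D (xstar j)), ρ v) / c
          with hFsdef
        clear_value Fs
        set S : ℝ := ∑ j ∈ Finset.range k, r j with hSdef
        have hS0 : 0 ≤ S := Finset.sum_nonneg (fun j _ => hr0 j)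
        clear_value S
        have hrk : r k = (∑ v ∈ D (xt ⟨k, hk⟩) \ A k, ρ v) / c
            - (∑ v ∈ D (x ⟨k, hk⟩) \ A k, ρ v) / c := by
          simp only [hrdef]; rw [dif_pos hk, sub_div]
        -- normalized key step
        have hΔt : Fs ≤ (∑ v ∈ A k, ρ v) / c
            + (N:ℝ) * ((∑ v ∈ D (xt ⟨k, hk⟩) \ A k, ρ v) / c) := by
          have h := mul_le_mul_of_nonneg_right (hkey k hk) hci
          rw [hFsdef]
          rw [div_eq_mul_inv, div_eq_mul_inv, div_eq_mul_inv]
          nlinarith [h]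
        have hGk : (∑ v ∈ A (k+1), ρ v) / c = (∑ v ∈ A k, ρ v) / c
            + (∑ v ∈ D (x ⟨k, hk⟩) \ A k, ρ v) / c := by
          rw [hG k hk, add_div]
        set δ : ℝ := Fs - (∑ v ∈ A k, ρ v) / c with hδdef
        clear_value δ
        have h4 : δ - (∑ v ∈ D (xt ⟨k, hk⟩) \ A k, ρ v) / c ≤ q * δ := by
          have hδN : δ ≤ (N:ℝ) * ((∑ v ∈ D (xt ⟨k, hk⟩) \ A k, ρ v) / c) := by
            rw [hδdef]; linarith
          have hqδ : q * δ = δ - δ / (N:ℝ) := by rw [hqdef]; ring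
          rw [hqδ]
          have : δ / (N:ℝ) ≤ (∑ v ∈ D (xt ⟨k, hk⟩) \ A k, ρ v) / c := by
            rw [div_le_iff₀ hNpos]
            linarith
          linarith
        have h1 : q * δ ≤ q * (q^k * Fs + S) := mul_le_mul_of_nonneg_left ih' hq0
        have h2 : q * S ≤ S := mul_le_of_le_one_left hS0 hq1
        have h5 : q * (q^k * Fs + S) = q^(k+1) * Fs + q * S := by ring
        rw [Finset.sum_range_succ, ← hSdef, hrk, hGk]
        have hδ' : Fs - ((∑ v ∈ A k, ρ v) / c + (∑ v ∈ D (x ⟨k, hk⟩) \ A k, ρ v) / c)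
            = δ - (∑ v ∈ D (xt ⟨k, hk⟩) \ A k, ρ v) / c
              + ((∑ v ∈ D (xt ⟨k, hk⟩) \ A k, ρ v) / c
                - (∑ v ∈ D (x ⟨k, hk⟩) \ A k, ρ v) / c) := by
          rw [hδdef]; ring
        linarith [h4, h1, h2, h5, hδ']
    -- conclude
    have keyN := key N (le_refl N)
    rw [hAN] at keyN
    have hqN : q^N ≤ (Real.exp 1)⁻¹ := by
      have hq_exp : q ≤ Real.exp (-(1/(N:ℝ))) := by
        have := Real.add_one_le_exp (-(1/(N:ℝ)))
        rw [hqdef]; linarith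
      have hpow : q^N ≤ (Real.exp (-(1/(N:ℝ))))^N := pow_le_pow_left₀ hq0 hq_exp N
      have hexp : (Real.exp (-(1/(N:ℝ))))^N = Real.exp (-1) := by
        rw [← Real.exp_nat_mul]
        congr 1
        field_simp
      rw [hexp] at hpow
      rwa [Real.exp_neg] at hpow
    have hqNFs : q^N * ((∑ v ∈ Finset.univ.biUnion (fun j => D (xstar j)), ρ v) / c)
        ≤ (Real.exp 1)⁻¹ * ((∑ v ∈ Finset.univ.biUnion (fun j => D (xstar j)), ρ v) / c) :=
      mul_le_mul_of_nonneg_right hqN hFstar0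
    have hrε : ∑ j ∈ Finset.range N, r j ≤ ε := by
      rw [← Fin.sum_univ_eq_sum_range r N]
      refine le_trans (Finset.sum_le_sum ?_) hε
      intro i _
      have hri : r (i : ℕ)
          = ((∑ v ∈ D (xt i) \ E i, ρ v) - ∑ v ∈ D (x i) \ E i, ρ v) / c := by
        simp only [hrdef]
        rw [dif_pos i.isLt]
        simp only [Fin.eta]
        rw [hEA i]
      rw [hri]
      exact le_trans (part1 i).1 (part1 i).2
    linarith [keyN, hqNFs, hrε]
end
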